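/- Let n ≥ 5, 1 ≤ k, ℓ < n/2, and suppose k·ℓ ≡ 1 (mod n) or k·ℓ ≡ -1 (mod n). Then GP(n,k) and GP(n,ℓ) are isomorphic as graphs. -/

import Mathlib

/-- The base relation for the generalized Petersen graph `GP(n,k)`:
`a_i ~ a_{i+1}`, `a_i ~ b_i`, `b_i ~ b_{i+k}`, indices mod `n`.
Outer vertices `a_i` are `Sum.inl i`, inner vertices `b_i` are `Sum.inr i`. -/
def gpRel (n k : ℕ) : (ZMod n ⊕ ZMod n) → (ZMod n ⊕ ZMod n) → Prop
  | Sum.inl i, Sum.inl j => j = i + 1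
  | Sum.inl i, Sum.inr j => j = i
  | Sum.inr i, Sum.inr j => j = i + (k : ZMod n)
  | _, _ => False

/-- The generalized Petersen graph `GP(n,k)`. -/
def GP (n k : ℕ) : SimpleGraph (ZMod n ⊕ ZMod n) := SimpleGraph.fromRel (gpRel n k)

/-- If `n ≥ 5`, `1 ≤ k, ℓ < n/2`, and `k·ℓ ≡ ±1 (mod n)`, then `GP(n,k)` and `GP(n,ℓ)`
are isomorphic as graphs. -/
theorem gp_iso_of_mul_cong_pm_one (n k l : ℕ) (hn : 5 ≤ n)
    (hk1 : 1 ≤ k) (hk2 : 2 * k < n) (hl1 : 1 ≤ l) (hl2 : 2 * l < n)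
    (h : ((k * l : ℕ) : ZMod n) = 1 ∨ ((k * l : ℕ) : ZMod n) = -1) :
    Nonempty (GP n k ≃g GP n l) := by
  have hlk : (l : ZMod n) * (k : ZMod n) = 1 ∨ (l : ZMod n) * (k : ZMod n) = -1 := by
    push_cast at h
    rcases h with h | h
    · left; rw [mul_comm]; exact h
    · right; rw [mul_comm]; exact h
  have hul : IsUnit (l : ZMod n) := by
    rcases hlk with h1 | h1
    · exact IsUnit.of_mul_eq_one _ h1
    · exact IsUnit.of_mul_eq_one (-(k : ZMod n)) (by rw [mul_neg, h1, neg_neg])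
  obtain ⟨u, hu⟩ := hul
  have hinj : ∀ i j : ZMod n, (l : ZMod n) * i = (l : ZMod n) * j ↔ i = j := by
    intro i j
    constructor
    · intro hh
      rw [← hu] at hh
      have := congrArg (fun x => (↑u⁻¹ : ZMod n) * x) hh
      simpa [← mul_assoc] using this
    · intro hh; rw [hh]
  let m : Equiv.Perm (ZMod n) := Units.mulLeft u
  have hm : ∀ i : ZMod n, m i = (l : ZMod n) * i := fun i => by simp [m, hu]
  let e : (ZMod n ⊕ ZMod n) ≃ (ZMod n ⊕ ZMod n) :=
    (Equiv.sumCongr m m).trans (Equiv.sumComm _ _)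
  refine ⟨⟨e, ?_⟩⟩
  intro a b
  cases a with
  | inl i =>
    cases b with
    | inl j =>
      simp only [e, Equiv.trans_apply, Equiv.sumCongr_apply, Sum.map_inl, Equiv.sumComm_apply,
        Sum.swap_inl, hm, GP, SimpleGraph.fromRel_adj, gpRel]
      constructor
      · rintro ⟨hne, hrel⟩
        refine ⟨fun hc => hne (by rw [Sum.inl.inj hc]), ?_⟩
        rcases hrel with h1 | h1
        · exact Or.inl ((hinj j (i + 1)).1 (by linear_combination h1))
        · exact Or.inr ((hinj i (j + 1)).1 (by linear_combination h1))
      · rintro ⟨hne, hrel⟩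
        refine ⟨fun hc => hne (congrArg Sum.inl ((hinj i j).1 (Sum.inr.inj hc))), ?_⟩
        rcases hrel with h1 | h1
        · exact Or.inl (by linear_combination (l : ZMod n) * h1)
        · exact Or.inr (by linear_combination (l : ZMod n) * h1)
    | inr j =>
      simp only [e, Equiv.trans_apply, Equiv.sumCongr_apply, Sum.map_inl, Sum.map_inr,
        Equiv.sumComm_apply, Sum.swap_inl, Sum.swap_inr, hm, GP, SimpleGraph.fromRel_adj, gpRel]
      simp only [false_or, or_false]
      constructor
      · rintro ⟨-, h1⟩
        exact ⟨by simp, ((hinj i j).1 h1).symm⟩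
      · rintro ⟨-, h1⟩
        exact ⟨by simp, by rw [h1]⟩
  | inr i =>
    cases b with
    | inl j =>
      simp only [e, Equiv.trans_apply, Equiv.sumCongr_apply, Sum.map_inl, Sum.map_inr,
        Equiv.sumComm_apply, Sum.swap_inl, Sum.swap_inr, hm, GP, SimpleGraph.fromRel_adj, gpRel]
      simp only [false_or, or_false]
      constructor
      · rintro ⟨-, h1⟩
        exact ⟨by simp, ((hinj j i).1 h1).symm⟩
      · rintro ⟨-, h1⟩
        exact ⟨by simp, by rw [h1]⟩
    | inr j =>
      simp only [e, Equiv.trans_apply, Equiv.sumCongr_apply, Sum.map_inr, Equiv.sumComm_apply,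
        Sum.swap_inr, hm, GP, SimpleGraph.fromRel_adj, gpRel]
      have hne_iff : (Sum.inl ((l : ZMod n) * i) : ZMod n ⊕ ZMod n) ≠ Sum.inl ((l : ZMod n) * j)
          ↔ (Sum.inr i : ZMod n ⊕ ZMod n) ≠ Sum.inr j := by
        simp [hinj i j]
      rcases hlk with h1 | h1
      · constructor
        · rintro ⟨hne, hrel⟩
          refine ⟨hne_iff.1 hne, ?_⟩
          rcases hrel with h2 | h2
          · exact Or.inl ((hinj j (i + k)).1 (by linear_combination h2 - h1))
          · exact Or.inr ((hinj i (j + k)).1 (by linear_combination h2 - h1))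
        · rintro ⟨hne, hrel⟩
          refine ⟨hne_iff.2 hne, ?_⟩
          rcases hrel with h2 | h2
          · exact Or.inl (by linear_combination (l : ZMod n) * h2 + h1)
          · exact Or.inr (by linear_combination (l : ZMod n) * h2 + h1)
      · constructor
        · rintro ⟨hne, hrel⟩
          refine ⟨hne_iff.1 hne, ?_⟩
          rcases hrel with h2 | h2
          · exact Or.inr ((hinj i (j + k)).1 (by linear_combination -h2 - h1))
          · exact Or.inl ((hinj j (i + k)).1 (by linear_combination -h2 - h1))
        · rintro ⟨hne, hrel⟩
          refine ⟨hne_iff.2 hne, ?_⟩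
          rcases hrel with h2 | h2
          · exact Or.inr (by linear_combination -(l : ZMod n) * h2 - h1)
          · exact Or.inl (by linear_combination -(l : ZMod n) * h2 - h1)
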